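/- Suppose that for a finite set V of n points in ℝ³ and sets of lines, the Guth–Katz incidence bound holds: for any finite set L of m lines in ℝ³ with at most q₂ lines of L contained in any single plane, I(V, L) ≤ K·(n^{1/2}m^{3/4} + n^{2/3}m^{1/3}q₂^{1/3} + n + m). Also suppose the planar bound |L_r(W)| ≤ K·(|W|²/r³ + |W|/r) for point sets W in any 2-flat. Then, letting s₂ be the maximum number of points of V contained in a 2-flat, for all r ≥ 2: |L_r(V)| ≤ K'·(n²/r⁴ + n·s₂/r³ + n/r) for a constant K' depending only on K. -/

import Mathlib

/-- `L` is an affine line in `ℝ³`. -/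
def IsLineR (L : Set (Fin 3 → ℝ)) : Prop :=
  ∃ a b : Fin 3 → ℝ, b ≠ 0 ∧ L = {p | ∃ t : ℝ, p = a + t • b}

/-- `P` is a 2-flat (affine plane) in `ℝ³`. -/
def IsPlaneR (P : Set (Fin 3 → ℝ)) : Prop :=
  ∃ a b c : Fin 3 → ℝ, LinearIndependent ℝ ![b, c] ∧
    P = {p | ∃ s t : ℝ, p = a + s • b + t • c}

/-- The set of `r`-rich lines of a point set `W ⊆ ℝ³`. -/
def richLinesR (r : ℕ) (W : Set (Fin 3 → ℝ)) : Set (Set (Fin 3 → ℝ)) :=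
  {L | IsLineR L ∧ r ≤ (L ∩ W).ncard}

/-- The number of incidences between a point set and a set of lines. -/
noncomputable def incidences (W : Set (Fin 3 → ℝ)) (L : Set (Set (Fin 3 → ℝ))) : ℕ :=
  Set.ncard {pl : (Fin 3 → ℝ) × Set (Fin 3 → ℝ) | pl.1 ∈ W ∧ pl.2 ∈ L ∧ pl.1 ∈ pl.2}

lemma line_eq_two_pts {L : Set (Fin 3 → ℝ)} (hL : IsLineR L) {p q : Fin 3 → ℝ}
    (hp : p ∈ L) (hq : q ∈ L) (hpq : p ≠ q) :
    L = {x | ∃ t : ℝ, x = p + t • (q - p)} := by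
  obtain ⟨a, b, hb, rfl⟩ := hL
  obtain ⟨t1, rfl⟩ := hp
  obtain ⟨t2, rfl⟩ := hq
  have ht : t2 - t1 ≠ 0 := by
    intro h
    apply hpq
    have : t1 = t2 := by linarith [sub_eq_zero.mp h]
    rw [this]
  have hqp : (a + t2 • b) - (a + t1 • b) = (t2 - t1) • b := by
    rw [sub_smul]; abel
  ext x
  simp only [Set.mem_setOf_eq]
  constructor
  · rintro ⟨t, rfl⟩
    refine ⟨(t - t1) / (t2 - t1), ?_⟩
    rw [hqp, smul_smul, div_mul_cancel₀ _ ht, sub_smul]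
    abel
  · rintro ⟨t, rfl⟩
    refine ⟨t1 + t * (t2 - t1), ?_⟩
    rw [hqp, smul_smul, add_smul]
    abel

lemma line_unique {L L' : Set (Fin 3 → ℝ)} (hL : IsLineR L) (hL' : IsLineR L')
    {p q : Fin 3 → ℝ} (hp : p ∈ L) (hq : q ∈ L) (hp' : p ∈ L') (hq' : q ∈ L')
    (hpq : p ≠ q) : L = L' := by
  rw [line_eq_two_pts hL hp hq hpq, line_eq_two_pts hL' hp' hq' hpq]

noncomputable def pickPair (W : Set (Fin 3 → ℝ)) (ℓ : Set (Fin 3 → ℝ)) :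
    (Fin 3 → ℝ) × (Fin 3 → ℝ) :=
  open Classical in
  if h : ∃ p q, p ∈ ℓ ∩ W ∧ q ∈ ℓ ∩ W ∧ p ≠ q then
    (h.choose, h.choose_spec.choose) else (0, 0)

lemma pickPair_spec {W ℓ : Set (Fin 3 → ℝ)}
    (h : ∃ p q, p ∈ ℓ ∩ W ∧ q ∈ ℓ ∩ W ∧ p ≠ q) :
    (pickPair W ℓ).1 ∈ ℓ ∩ W ∧ (pickPair W ℓ).2 ∈ ℓ ∩ W ∧
      (pickPair W ℓ).1 ≠ (pickPair W ℓ).2 := by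
  rw [pickPair, dif_pos h]
  exact h.choose_spec.choose_spec

lemma rich_two_pts {r : ℕ} (hr : 2 ≤ r) {W : Set (Fin 3 → ℝ)} (hW : W.Finite)
    {ℓ : Set (Fin 3 → ℝ)} (hℓ : ℓ ∈ richLinesR r W) :
    ∃ p q, p ∈ ℓ ∩ W ∧ q ∈ ℓ ∩ W ∧ p ≠ q := by
  have hfin : (ℓ ∩ W).Finite := hW.subset Set.inter_subset_right
  have : 1 < (ℓ ∩ W).ncard := lt_of_lt_of_le (by omega) hℓ.2
  exact (Set.one_lt_ncard_iff hfin).mp this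

lemma rich_inj {r : ℕ} (hr : 2 ≤ r) {W : Set (Fin 3 → ℝ)} (hW : W.Finite) :
    Set.InjOn (pickPair W) (richLinesR r W) := by
  intro ℓ hℓ ℓ' hℓ' heq
  obtain ⟨h1, h2, h3⟩ := pickPair_spec (rich_two_pts hr hW hℓ)
  obtain ⟨h1', h2', h3'⟩ := pickPair_spec (rich_two_pts hr hW hℓ')
  rw [heq] at h1 h2 h3
  exact line_unique hℓ.1 hℓ'.1 h1.1 h2.1 h1'.1 h2'.1 h3

lemma rich_maps {r : ℕ} (hr : 2 ≤ r) {W : Set (Fin 3 → ℝ)} (hW : W.Finite) :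
    ∀ ℓ ∈ richLinesR r W, pickPair W ℓ ∈ W ×ˢ W := by
  intro ℓ hℓ
  obtain ⟨h1, h2, _⟩ := pickPair_spec (rich_two_pts hr hW hℓ)
  exact ⟨h1.2, h2.2⟩

lemma rich_finite {r : ℕ} (hr : 2 ≤ r) {W : Set (Fin 3 → ℝ)} (hW : W.Finite) :
    (richLinesR r W).Finite := by
  have : ((pickPair W) '' (richLinesR r W)).Finite :=
    (hW.prod hW).subset (Set.image_subset_iff.mpr (rich_maps hr hW))
  exact Set.Finite.of_finite_image this (rich_inj hr hW)

lemma rich_card_le {r : ℕ} (hr : 2 ≤ r) {W : Set (Fin 3 → ℝ)} (hW : W.Finite) :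
    (richLinesR r W).ncard ≤ W.ncard * W.ncard := by
  have h1 : (richLinesR r W).ncard ≤ (W ×ˢ W).ncard :=
    Set.ncard_le_ncard_of_injOn _ (rich_maps hr hW) (rich_inj hr hW) (hW.prod hW)
  have h2 : (W ×ˢ W).ncard = W.ncard * W.ncard := by
    rw [← Nat.card_coe_set_eq, ← Nat.card_coe_set_eq, ← Nat.card_prod]
    exact Nat.card_congr (Equiv.Set.prod W W)
  omega

lemma incidences_lower {V : Set (Fin 3 → ℝ)} (hV : V.Finite)
    {L : Set (Set (Fin 3 → ℝ))} (hL : L.Finite) {r : ℕ}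
    (hrich : ∀ ℓ ∈ L, r ≤ (ℓ ∩ V).ncard) :
    r * L.ncard ≤ incidences V L := by
  classical
  set I : Set ((Fin 3 → ℝ) × Set (Fin 3 → ℝ)) :=
    {pl | pl.1 ∈ V ∧ pl.2 ∈ L ∧ pl.1 ∈ pl.2} with hI
  have hIfin : I.Finite := by
    apply (hV.prod hL).subset
    rintro ⟨p, ℓ⟩ ⟨h1, h2, _⟩
    exact ⟨h1, h2⟩
  set Vf := hV.toFinset
  set Lf := hL.toFinset
  set S : Finset ((Fin 3 → ℝ) × Set (Fin 3 → ℝ)) :=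
    Lf.biUnion (fun ℓ => (Vf.filter (· ∈ ℓ)) ×ˢ ({ℓ} : Finset _)) with hS
  have hdisj : ∀ ℓ₁ ∈ Lf, ∀ ℓ₂ ∈ Lf, ℓ₁ ≠ ℓ₂ →
      Disjoint ((Vf.filter (· ∈ ℓ₁)) ×ˢ ({ℓ₁} : Finset _))
        ((Vf.filter (· ∈ ℓ₂)) ×ˢ ({ℓ₂} : Finset _)) := by
    intro ℓ₁ _ ℓ₂ _ hne
    rw [Finset.disjoint_left]
    rintro ⟨p, ℓ⟩ h1 h2
    rw [Finset.mem_product, Finset.mem_singleton] at h1 h2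
    exact hne (h1.2 ▸ h2.2)
  have hcardS : S.card = ∑ ℓ ∈ Lf, ((Vf.filter (· ∈ ℓ)) ×ˢ ({ℓ} : Finset _)).card :=
    Finset.card_biUnion hdisj
  have hfib : ∀ ℓ ∈ Lf, r ≤ ((Vf.filter (· ∈ ℓ)) ×ˢ ({ℓ} : Finset _)).card := by
    intro ℓ hℓ
    rw [Finset.card_product, Finset.card_singleton, mul_one]
    have hset : ((Vf.filter (· ∈ ℓ) : Finset _) : Set (Fin 3 → ℝ)) = ℓ ∩ V := by
      ext x
      simp only [Finset.coe_filter, Set.mem_setOf_eq, Set.Finite.mem_toFinset, Vf,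
        Set.mem_inter_iff]
      tauto
    calc r ≤ (ℓ ∩ V).ncard := hrich ℓ (hL.mem_toFinset.mp hℓ)
      _ = (Vf.filter (· ∈ ℓ)).card := by rw [← hset, Set.ncard_coe_finset]
  have hge : r * Lf.card ≤ S.card := by
    rw [hcardS, mul_comm, ← smul_eq_mul]
    exact Finset.card_nsmul_le_sum _ _ _ hfib
  have hsub : S ⊆ hIfin.toFinset := by
    rintro ⟨p, ℓ⟩ hmem
    rw [hS, Finset.mem_biUnion] at hmem
    obtain ⟨ℓ', hℓ', hm⟩ := hmem
    rw [Finset.mem_product, Finset.mem_singleton] at hm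
    obtain ⟨hp, rfl⟩ := hm
    rw [Finset.mem_filter] at hp
    exact hIfin.mem_toFinset.mpr ⟨hV.mem_toFinset.mp hp.1, hL.mem_toFinset.mp hℓ', hp.2⟩
  have : S.card ≤ hIfin.toFinset.card := Finset.card_le_card hsub
  have hI2 : incidences V L = hIfin.toFinset.card := by
    rw [incidences, Set.ncard_eq_toFinset_card _ hIfin]
  have hL2 : L.ncard = Lf.card := Set.ncard_eq_toFinset_card _ hL
  rw [hI2, hL2]
  omega

lemma sq_le_imp {a b c : ℝ} (ha : 0 ≤ a) (hb : 0 ≤ b) (hc : 0 ≤ c)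
    (h : a ^ 2 ≤ c * b ^ 2) : a ≤ Real.sqrt c * b := by
  have := Real.sqrt_le_sqrt h
  rwa [Real.sqrt_sq ha, Real.sqrt_mul hc, Real.sqrt_sq hb] at this

lemma rpow_pow_eq {x : ℝ} (hx : 0 ≤ x) (a : ℝ) (k b : ℕ) (hab : a * k = b) :
    (x ^ a) ^ k = x ^ b := by
  rw [← Real.rpow_natCast (x ^ a) k, ← Real.rpow_mul hx, hab, Real.rpow_natCast]

set_option maxHeartbeats 1600000 in
lemma algebra_step (K n m s q r : ℝ) (hK : 0 < K) (hn : 0 ≤ n) (hs : 0 ≤ s)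
    (hr : 2 ≤ r) (hm : m = 0 ∨ 1 ≤ m) (hmn : m ≤ n ^ 2)
    (hq : 0 ≤ q) (hqb : q ≤ K * (s ^ 2 / r ^ 3 + s / r) + 1)
    (hmain : r * m ≤ K * (n ^ ((1:ℝ)/2) * m ^ ((3:ℝ)/4)
      + n ^ ((2:ℝ)/3) * m ^ ((1:ℝ)/3) * q ^ ((1:ℝ)/3) + n + m)) :
    m ≤ ((4*K) ^ 4 + Real.sqrt ((4*K) ^ 3 * (K+1)) + 4*K)
      * (n ^ 2 / r ^ 4 + n * s / r ^ 3 + n / r) := by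
  have hr0 : (0:ℝ) < r := by linarith
  set K' : ℝ := (4*K) ^ 4 + Real.sqrt ((4*K) ^ 3 * (K+1)) + 4*K with hK'
  set B : ℝ := n ^ 2 / r ^ 4 + n * s / r ^ 3 + n / r with hB
  have hsqrt : 0 ≤ Real.sqrt ((4*K) ^ 3 * (K+1)) := Real.sqrt_nonneg _
  have hK'0 : 0 ≤ K' := by positivity
  have hB0 : 0 ≤ B := by positivity
  have h4K4 : (0:ℝ) ≤ (4*K) ^ 4 := by positivity
  have h4K : (0:ℝ) ≤ 4*K := by linarith
  rcases hm with hm | hm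
  · rw [hm]; positivity
  have hm0 : (0:ℝ) < m := by linarith
  -- case split
  have hcases : r * m ≤ 4*K * (n ^ ((1:ℝ)/2) * m ^ ((3:ℝ)/4))
      ∨ r * m ≤ 4*K * (n ^ ((2:ℝ)/3) * m ^ ((1:ℝ)/3) * q ^ ((1:ℝ)/3))
      ∨ r * m ≤ 4*K * n ∨ r * m ≤ 4*K * m := by
    by_contra hcon
    push_neg at hcon
    obtain ⟨h1, h2, h3, h4⟩ := hcon
    nlinarith [hmain]
  have hcomp1 : n ^ 2 / r ^ 4 ≤ B := by
    have : 0 ≤ n * s / r ^ 3 + n / r := by positivity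
    rw [hB]; linarith
  have hcomp3 : n / r ≤ B := by
    have : 0 ≤ n ^ 2 / r ^ 4 + n * s / r ^ 3 := by positivity
    rw [hB]; linarith
  have hfin : ∀ c t : ℝ, 0 ≤ t → c ≤ K' → t ≤ B → m ≤ c * t → m ≤ K' * B := by
    intro c t ht hc htB hmc
    calc m ≤ c * t := hmc
      _ ≤ K' * B := mul_le_mul hc htB ht hK'0
  rcases hcases with h | h | h | h
  · -- case 1
    have e1 : (n ^ ((1:ℝ)/2)) ^ (4:ℕ) = n ^ (2:ℕ) := rpow_pow_eq hn _ _ _ (by norm_num)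
    have e2 : (m ^ ((3:ℝ)/4)) ^ (4:ℕ) = m ^ (3:ℕ) := rpow_pow_eq hm0.le _ _ _ (by norm_num)
    have key : r ^ 4 * m ^ 4 ≤ (4*K) ^ 4 * (n ^ 2 * m ^ 3) := by
      have h4 := pow_le_pow_left₀ (by positivity) h 4
      calc r ^ 4 * m ^ 4 = (r * m) ^ 4 := by ring
        _ ≤ (4*K * (n ^ ((1:ℝ)/2) * m ^ ((3:ℝ)/4))) ^ 4 := h4
        _ = (4*K) ^ 4 * ((n ^ ((1:ℝ)/2)) ^ (4:ℕ) * (m ^ ((3:ℝ)/4)) ^ (4:ℕ)) := by ring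
        _ = (4*K) ^ 4 * (n ^ 2 * m ^ 3) := by rw [e1, e2]
    have hdiv : m * r ^ 4 ≤ (4*K) ^ 4 * n ^ 2 := by
      nlinarith [key, pow_pos hm0 3]
    refine hfin ((4*K) ^ 4) (n ^ 2 / r ^ 4) (by positivity) (by linarith [hsqrt, h4K4, h4K]) hcomp1 ?_
    rw [mul_div_assoc'] at *
    rw [le_div_iff₀ (by positivity)]
    linarith
  · -- case 2
    have e3 : (n ^ ((2:ℝ)/3)) ^ (3:ℕ) = n ^ (2:ℕ) := rpow_pow_eq hn _ _ _ (by norm_num)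
    have e4 : (m ^ ((1:ℝ)/3)) ^ (3:ℕ) = m ^ (1:ℕ) := rpow_pow_eq hm0.le _ _ _ (by norm_num)
    have e5 : (q ^ ((1:ℝ)/3)) ^ (3:ℕ) = q ^ (1:ℕ) := rpow_pow_eq hq _ _ _ (by norm_num)
    have key : r ^ 3 * m ^ 3 ≤ (4*K) ^ 3 * (n ^ 2 * (m * q)) := by
      have h3 := pow_le_pow_left₀ (by positivity) h 3
      calc r ^ 3 * m ^ 3 = (r * m) ^ 3 := by ring
        _ ≤ (4*K * (n ^ ((2:ℝ)/3) * m ^ ((1:ℝ)/3) * q ^ ((1:ℝ)/3))) ^ 3 := h3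
        _ = (4*K) ^ 3 * ((n ^ ((2:ℝ)/3)) ^ (3:ℕ) * (m ^ ((1:ℝ)/3)) ^ (3:ℕ)
              * (q ^ ((1:ℝ)/3)) ^ (3:ℕ)) := by ring
        _ = (4*K) ^ 3 * (n ^ 2 * (m * q)) := by rw [e3, e4, e5]; ring
    have key2 : r ^ 3 * m ^ 2 ≤ (4*K) ^ 3 * (n ^ 2 * q) := by
      refine le_of_mul_le_mul_right ?_ hm0
      calc r ^ 3 * m ^ 2 * m = r ^ 3 * m ^ 3 := by ring
        _ ≤ (4*K) ^ 3 * (n ^ 2 * (m * q)) := key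
        _ = (4*K) ^ 3 * (n ^ 2 * q) * m := by ring
    have hq3 : r ^ 3 * q ≤ K * s ^ 2 + K * s * r ^ 2 + r ^ 3 := by
      have h1 := mul_le_mul_of_nonneg_left hqb (le_of_lt (pow_pos hr0 3))
      have h2 : r ^ 3 * (K * (s ^ 2 / r ^ 3 + s / r) + 1)
          = K * s ^ 2 + K * s * r ^ 2 + r ^ 3 := by
        field_simp
      linarith [h1, h2.le, h2.ge]
    have key3 : r ^ 6 * m ^ 2 ≤ (4*K) ^ 3 * (n ^ 2 * (K * s ^ 2 + K * s * r ^ 2 + r ^ 3)) := by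
      calc r ^ 6 * m ^ 2 = r ^ 3 * (r ^ 3 * m ^ 2) := by ring
        _ ≤ r ^ 3 * ((4*K) ^ 3 * (n ^ 2 * q)) :=
            mul_le_mul_of_nonneg_left key2 (le_of_lt (pow_pos hr0 3))
        _ = (4*K) ^ 3 * n ^ 2 * (r ^ 3 * q) := by ring
        _ ≤ (4*K) ^ 3 * n ^ 2 * (K * s ^ 2 + K * s * r ^ 2 + r ^ 3) :=
            mul_le_mul_of_nonneg_left hq3 (by positivity)
        _ = (4*K) ^ 3 * (n ^ 2 * (K * s ^ 2 + K * s * r ^ 2 + r ^ 3)) := by ring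
    have key4 : (m * r ^ 3) ^ 2 ≤ ((4*K) ^ 3 * (K+1)) * (n * s + n * r ^ 2) ^ 2 := by
      have hr43 : 0 ≤ r ^ 4 - r ^ 3 := by
        have h1 : (0:ℝ) ≤ r ^ 3 * (r - 1) :=
          mul_nonneg (pow_nonneg hr0.le 3) (by linarith)
        linarith [h1]
      have inner : K * s ^ 2 + K * s * r ^ 2 + r ^ 3 ≤ (K+1) * (s + r ^ 2) ^ 2 := by
        nlinarith [sq_nonneg s, mul_nonneg hs (sq_nonneg r), hr43,
          mul_nonneg (mul_nonneg hK.le hs) (sq_nonneg r),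
          mul_nonneg hK.le (pow_nonneg hr0.le 4)]
      calc (m * r ^ 3) ^ 2 = r ^ 6 * m ^ 2 := by ring
        _ ≤ (4*K) ^ 3 * (n ^ 2 * (K * s ^ 2 + K * s * r ^ 2 + r ^ 3)) := key3
        _ ≤ (4*K) ^ 3 * (n ^ 2 * ((K+1) * (s + r ^ 2) ^ 2)) := by
            apply mul_le_mul_of_nonneg_left
              (mul_le_mul_of_nonneg_left inner (sq_nonneg n)) (by positivity)
        _ = ((4*K) ^ 3 * (K+1)) * (n * s + n * r ^ 2) ^ 2 := by ring
    have key5 : m * r ^ 3 ≤ Real.sqrt ((4*K) ^ 3 * (K+1)) * (n * s + n * r ^ 2) :=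
      sq_le_imp (by positivity) (by positivity) (by positivity) key4
    refine hfin (Real.sqrt ((4*K) ^ 3 * (K+1))) (n * s / r ^ 3 + n / r)
      (by positivity) (by linarith [hsqrt, h4K4, h4K]) ?_ ?_
    · have : 0 ≤ n ^ 2 / r ^ 4 := by positivity
      rw [hB]; linarith
    · have heq : n * s / r ^ 3 + n / r = (n * s + n * r ^ 2) / r ^ 3 := by
        field_simp
      rw [heq, ← mul_div_assoc, le_div_iff₀ (by positivity)]
      calc m * r ^ 3 ≤ Real.sqrt ((4*K) ^ 3 * (K+1)) * (n * s + n * r ^ 2) := key5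
        _ = _ := by ring
  · -- case 3
    refine hfin (4*K) (n / r) (by positivity) (by linarith [hsqrt, h4K4, h4K]) hcomp3 ?_
    rw [← mul_div_assoc, le_div_iff₀ hr0]
    linarith
  · -- case 4
    have hr4K : r ≤ 4*K := by nlinarith [h, hm0]
    refine hfin ((4*K) ^ 4) (n ^ 2 / r ^ 4) (by positivity) (by linarith [hsqrt, h4K4, h4K]) hcomp1 ?_
    rw [← mul_div_assoc, le_div_iff₀ (by positivity)]
    have hrp : r ^ 4 ≤ (4*K) ^ 4 := by
      apply pow_le_pow_left₀ hr0.le hr4K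
    calc m * r ^ 4 ≤ n ^ 2 * r ^ 4 := by nlinarith [pow_pos hr0 4]
      _ ≤ n ^ 2 * (4*K) ^ 4 := by nlinarith [sq_nonneg n]
      _ = (4*K) ^ 4 * n ^ 2 := by ring

/-- Assuming the Guth–Katz incidence bound in `ℝ³` and the planar rich-lines
bound, every `n`-point set `V ⊆ ℝ³` with at most `s₂` points on any 2-flat
satisfies `|L_r(V)| ≤ K'·(n²/r⁴ + n·s₂/r³ + n/r)` for a constant `K'`
depending only on `K`. -/
theorem stmt15 (K : ℝ) (hK : 0 < K) :
    ∃ K' : ℝ, ∀ (V : Set (Fin 3 → ℝ)), V.Finite →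
      -- Guth–Katz incidence bound for the point set V
      (∀ (L : Set (Set (Fin 3 → ℝ))), L.Finite → (∀ ℓ ∈ L, IsLineR ℓ) →
        ∀ q2 : ℕ, (∀ P, IsPlaneR P → ({ℓ ∈ L | ℓ ⊆ P}).ncard ≤ q2) →
          (incidences V L : ℝ) ≤
            K * ((V.ncard : ℝ) ^ ((1 : ℝ) / 2) * (L.ncard : ℝ) ^ ((3 : ℝ) / 4)
              + (V.ncard : ℝ) ^ ((2 : ℝ) / 3) * (L.ncard : ℝ) ^ ((1 : ℝ) / 3)
                  * (q2 : ℝ) ^ ((1 : ℝ) / 3)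
              + (V.ncard : ℝ) + (L.ncard : ℝ))) →
      -- planar rich-lines bound for point sets contained in a 2-flat
      (∀ (W : Set (Fin 3 → ℝ)), W.Finite → (∃ P, IsPlaneR P ∧ W ⊆ P) →
        ∀ r : ℕ, 2 ≤ r →
          ((richLinesR r W).ncard : ℝ) ≤
            K * ((W.ncard : ℝ) ^ 2 / (r : ℝ) ^ 3 + (W.ncard : ℝ) / (r : ℝ))) →
      ∀ s2 : ℕ, (∀ P, IsPlaneR P → (V ∩ P).ncard ≤ s2) →
        ∀ r : ℕ, 2 ≤ r →
          ((richLinesR r V).ncard : ℝ) ≤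
            K' * ((V.ncard : ℝ) ^ 2 / (r : ℝ) ^ 4
              + (V.ncard : ℝ) * (s2 : ℝ) / (r : ℝ) ^ 3
              + (V.ncard : ℝ) / (r : ℝ)) := by
  refine ⟨(4*K) ^ 4 + Real.sqrt ((4*K) ^ 3 * (K+1)) + 4*K, ?_⟩
  intro V hV hGK hPlanar s2 hs2 r hr
  have hrR : (2:ℝ) ≤ (r:ℝ) := by exact_mod_cast hr
  have hr0 : (0:ℝ) < (r:ℝ) := by linarith
  set L : Set (Set (Fin 3 → ℝ)) := richLinesR r V with hLdef
  have hLfin : L.Finite := rich_finite hr hV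
  set X : ℝ := K * ((s2:ℝ) ^ 2 / (r:ℝ) ^ 3 + (s2:ℝ) / (r:ℝ)) with hX
  have hX0 : 0 ≤ X := by positivity
  set q2 : ℕ := ⌈X⌉₊ with hq2def
  -- q2 bounds the number of lines of L in any plane
  have hq2 : ∀ P, IsPlaneR P → ({ℓ ∈ L | ℓ ⊆ P}).ncard ≤ q2 := by
    intro P hP
    have hVP : (V ∩ P).Finite := hV.subset Set.inter_subset_left
    have hsub : {ℓ ∈ L | ℓ ⊆ P} ⊆ richLinesR r (V ∩ P) := by
      rintro ℓ ⟨hℓ, hℓP⟩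
      refine ⟨hℓ.1, ?_⟩
      have : ℓ ∩ (V ∩ P) = ℓ ∩ V := by
        ext x
        constructor
        · rintro ⟨h1, h2, _⟩; exact ⟨h1, h2⟩
        · rintro ⟨h1, h2⟩; exact ⟨h1, h2, hℓP h1⟩
      rw [this]
      exact hℓ.2
    have h1 : ({ℓ ∈ L | ℓ ⊆ P}).ncard ≤ (richLinesR r (V ∩ P)).ncard :=
      Set.ncard_le_ncard hsub (rich_finite hr hVP)
    have h2 : ((richLinesR r (V ∩ P)).ncard : ℝ) ≤
        K * (((V ∩ P).ncard : ℝ) ^ 2 / (r:ℝ) ^ 3 + ((V ∩ P).ncard : ℝ) / (r:ℝ)) :=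
      hPlanar (V ∩ P) hVP ⟨P, hP, Set.inter_subset_right⟩ r hr
    have h3 : ((V ∩ P).ncard : ℝ) ≤ (s2:ℝ) := by exact_mod_cast hs2 P hP
    have h4 : ((richLinesR r (V ∩ P)).ncard : ℝ) ≤ X := by
      rw [hX]
      refine le_trans h2 ?_
      gcongr
    have h5 : (richLinesR r (V ∩ P)).ncard ≤ q2 := by
      rw [hq2def]
      calc (richLinesR r (V ∩ P)).ncard
          = ⌈((richLinesR r (V ∩ P)).ncard : ℝ)⌉₊ := by rw [Nat.ceil_natCast]
        _ ≤ ⌈X⌉₊ := Nat.ceil_le_ceil h4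
    omega
  -- incidence bounds
  have hinc := hGK L hLfin (fun ℓ hℓ => hℓ.1) q2 hq2
  have hlow : r * L.ncard ≤ incidences V L :=
    incidences_lower hV hLfin (fun ℓ hℓ => hℓ.2)
  have hlowR : (r:ℝ) * (L.ncard : ℝ) ≤ (incidences V L : ℝ) := by exact_mod_cast hlow
  have hmain : (r:ℝ) * (L.ncard : ℝ) ≤
      K * ((V.ncard : ℝ) ^ ((1:ℝ)/2) * (L.ncard : ℝ) ^ ((3:ℝ)/4)
        + (V.ncard : ℝ) ^ ((2:ℝ)/3) * (L.ncard : ℝ) ^ ((1:ℝ)/3) * (q2:ℝ) ^ ((1:ℝ)/3)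
        + (V.ncard : ℝ) + (L.ncard : ℝ)) := le_trans hlowR hinc
  have hqb : (q2:ℝ) ≤ K * ((s2:ℝ) ^ 2 / (r:ℝ) ^ 3 + (s2:ℝ) / (r:ℝ)) + 1 := by
    rw [hq2def]
    have := Nat.ceil_lt_add_one hX0
    rw [hX] at this
    linarith
  have hm : (L.ncard : ℝ) = 0 ∨ 1 ≤ (L.ncard : ℝ) := by
    rcases Nat.eq_zero_or_pos L.ncard with h | h
    · left; exact_mod_cast h
    · right; exact_mod_cast h
  have hmn : (L.ncard : ℝ) ≤ (V.ncard : ℝ) ^ 2 := by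
    have := rich_card_le hr hV
    have h' : (L.ncard : ℝ) ≤ (V.ncard : ℝ) * (V.ncard : ℝ) := by exact_mod_cast this
    nlinarith [h']
  exact algebra_step K (V.ncard : ℝ) (L.ncard : ℝ) (s2:ℝ) (q2:ℝ) (r:ℝ) hK
    (Nat.cast_nonneg _) (Nat.cast_nonneg _) hrR hm hmn (Nat.cast_nonneg _) hqb hmain
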